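/- arXiv:1803.10163 — 3 statements merged into one kernel-verified Lean document; each statement's English description precedes it below -/
import Mathlib

section
/- (Corollary on uniqueness) Assume p_M > 0 for all M ∈ D_I. Let τ : A(I) → A(I) be a linear map and let τ^ι = η ∘ τ ∘ η^{-1} : A(ι(I)) → A(ι(I)) be its copy, where η : A(I) → A(ι(I)) is the *-isomorphism determined by η(a_l) = a_{ι(l)} for l ∈ I. If fermionic standard quantum detailed balance holds, i.e. φ(a τ^ι(b)) = φ(τ(a) b) for all a ∈ A(I) and b ∈ A(ι(I)), then τ^ι is the unique linear map β : A(ι(I)) → A(ι(I)) satisfying φ(a β(b)) = φ(τ(a) b) for all a ∈ A(I) and b ∈ A(ι(I)). -/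
noncomputable section
open scoped InnerProductSpace ComplexConjugate
open ContinuousLinearMap

namespace Fermion

variable (L : Type) [Fintype L] [LinearOrder L]

/-- The fermionic Fock space over the one-particle space `h = ℓ²(L)`, realized concretely
via its orthonormal basis indexed by the finite subsets of `L` (the vectors `f_M`). -/
abbrev FockSpace := EuclideanSpace ℂ (Finset L)

variable {L}

/-- The vacuum vector `Ψ = f_∅`. -/
def vac : FockSpace L := EuclideanSpace.single ∅ 1

/-- Jordan–Wigner sign factor. -/
def jwSign (l : L) (S : Finset L) : ℂ := (-1 : ℂ) ^ (S.filter (fun k => k < l)).card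

/-- The creation operator `a*_l = a*(e_l)`. -/
def cre (l : L) : FockSpace L →L[ℂ] FockSpace L :=
  LinearMap.toContinuousLinearMap <|
    (EuclideanSpace.basisFun (Finset L) ℂ).toBasis.constr ℂ fun S =>
      if l ∈ S then 0 else jwSign l S • EuclideanSpace.single (insert l S) 1

/-- The annihilation operator `a_l = a(e_l)`. -/
def ann (l : L) : FockSpace L →L[ℂ] FockSpace L := ContinuousLinearMap.adjoint (cre l)

/-- The vector `f_{(l_1,…,l_n)} = a*_{l_1} ⋯ a*_{l_n} Ψ  (= P (e_{l_1} ⊗ ⋯ ⊗ e_{l_n}))`. -/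
def fvec (M : List L) : FockSpace L := M.foldr (fun l v => cre l v) vac

/-- The algebra `A(I)` : the unital *-subalgebra of `B(H)` generated by `{a_l : l ∈ I}`. -/
def A (I : Finset L) : StarSubalgebra ℂ (FockSpace L →L[ℂ] FockSpace L) :=
  StarAlgebra.adjoin ℂ (ann '' (I : Set L))

/-- The trace on `B(H)`. -/
def Tr (T : FockSpace L →L[ℂ] FockSpace L) : ℂ := LinearMap.trace ℂ (FockSpace L) T

/-- The rank-one operator `|x⟩⟨y|`. -/
def ketbra (x y : FockSpace L) : FockSpace L →L[ℂ] FockSpace L :=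
  (ContinuousLinearMap.toSpanSingleton ℂ x).comp (innerSL ℂ y)

/-- A valid choice of `D_I`: `D S` enumerates the finite set `S` without repetitions. -/
def IsEnum (D : Finset L → List L) : Prop := ∀ S : Finset L, (D S).Nodup ∧ (D S).toFinset = S

/-- The entangled vector `Φ = Σ_{M ∈ D_I} p_M^{1/2} f_{M ι(M)}`. -/
def Phi (D : Finset L → List L) (p : Finset L → ℝ) (I : Finset L) (ι : L → L) : FockSpace L :=
  ∑ S ∈ I.powerset, (Real.sqrt (p S) : ℂ) • fvec (D S ++ (D S).map ι)

/-- The state `φ(x) = ⟨Φ, xΦ⟩`. -/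
def phi (D : Finset L → List L) (p : Finset L → ℝ) (I : Finset L) (ι : L → L)
    (x : FockSpace L →L[ℂ] FockSpace L) : ℂ :=
  ⟪Phi D p I ι, x (Phi D p I ι)⟫_ℂ

variable {L : Type} [Fintype L] [LinearOrder L]

set_option linter.unusedSectionVars false
def bv (S : Finset L) : FockSpace L := EuclideanSpace.single S 1

lemma coord_eq_inner (v : FockSpace L) (S : Finset L) : ⟪bv S, v⟫_ℂ = v S := by
  simp [bv, EuclideanSpace.inner_single_left]

lemma inner_bv (X Y : Finset L) : ⟪bv X, bv Y⟫_ℂ = if X = Y then 1 else 0 := by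
  simp [bv, EuclideanSpace.inner_single_left, EuclideanSpace.single_apply, eq_comm]

lemma jwSign_mul_self (l : L) (S : Finset L) : jwSign l S * jwSign l S = 1 := by
  simp [jwSign, ← pow_add, ← two_mul, pow_mul]

lemma jwSign_cases (l : L) (S : Finset L) : jwSign l S = 1 ∨ jwSign l S = -1 := by
  rcases Nat.even_or_odd ((S.filter (fun k => k < l)).card) with h | h
  · exact Or.inl (by simp [jwSign, h.neg_one_pow])
  · exact Or.inr (by simp [jwSign, h.neg_one_pow])

lemma conj_jwSign (l : L) (S : Finset L) : conj (jwSign l S) = jwSign l S := by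
  rcases jwSign_cases l S with h | h <;> simp [h]

lemma cre_bv (l : L) (S : Finset L) :
    cre l (bv S) = if l ∈ S then 0 else jwSign l S • bv (insert l S) := by
  have h : bv S = (EuclideanSpace.basisFun (Finset L) ℂ).toBasis S := by
    simp [bv, EuclideanSpace.basisFun_apply]
  rw [cre, h]
  simpa [bv] using (Module.Basis.constr_basis (EuclideanSpace.basisFun (Finset L) ℂ).toBasis ℂ
    (fun S => if l ∈ S then 0 else jwSign l S • (EuclideanSpace.single (insert l S) 1 : FockSpace L)) S)

lemma ann_bv (l : L) (S : Finset L) :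
    ann l (bv S) = if l ∈ S then jwSign l (S.erase l) • bv (S.erase l) else 0 := by
  have key : ∀ T : Finset L, (ann l (bv S)) T =
      (if l ∈ S then jwSign l (S.erase l) • bv (S.erase l) else (0 : FockSpace L)) T := by
    intro T
    rw [← coord_eq_inner (ann l (bv S)) T, ann, ContinuousLinearMap.adjoint_inner_right, cre_bv]
    by_cases hT : l ∈ T
    · simp only [hT, if_true, inner_zero_left]
      by_cases hS : l ∈ S
      · have : S.erase l ≠ T := by rintro rfl; exact (Finset.notMem_erase l S) hT
        simp [hS, bv, EuclideanSpace.single_apply, this, Ne.symm this]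
      · simp [hS]
    · simp only [hT, if_false, inner_smul_left, inner_bv, conj_jwSign]
      by_cases hS : l ∈ S
      · by_cases he : S.erase l = T
        · have hins : insert l T = S := by
            rw [← he, Finset.insert_erase hS]
          have : jwSign l T = jwSign l (S.erase l) := by rw [he]
          simp [hins, he, this, bv, EuclideanSpace.single_apply, hS]
        · have hins : insert l T ≠ S := by
            intro h; exact he (by rw [← h, Finset.erase_insert hT])
          simp [hins, he, bv, EuclideanSpace.single_apply, hS, Ne.symm he]
      · have hins : insert l T ≠ S := fun h => hS (h ▸ Finset.mem_insert_self l T)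
        simp [hins, hS]
  exact PiLp.ext key

lemma numOp_bv (l : L) (S : Finset L) :
    (cre l * ann l) (bv S) = if l ∈ S then bv S else 0 := by
  rw [ContinuousLinearMap.mul_apply, ann_bv]
  by_cases hS : l ∈ S
  · have h1 : l ∉ S.erase l := Finset.notMem_erase l S
    simp [hS, map_smul, cre_bv, h1, smul_smul, jwSign_mul_self, Finset.insert_erase hS]
  · simp [hS]

lemma holeOp_bv (l : L) (S : Finset L) :
    (ann l * cre l) (bv S) = if l ∈ S then 0 else bv S := by
  rw [ContinuousLinearMap.mul_apply, cre_bv]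
  by_cases hS : l ∈ S
  · simp [hS]
  · have h1 : l ∈ insert l S := Finset.mem_insert_self l S
    simp [hS, map_smul, ann_bv, h1, smul_smul, jwSign_mul_self, Finset.erase_insert hS]

def projOp (I V : Finset L) : FockSpace L →L[ℂ] FockSpace L :=
  (I.toList.map (fun l => if l ∈ V then cre l * ann l else ann l * cre l)).prod

lemma projList_bv (V : Finset L) (ls : List L) (T : Finset L) :
    ((ls.map (fun l => if l ∈ V then cre l * ann l else ann l * cre l)).prod) (bv T)
      = if (∀ l ∈ ls, (l ∈ T ↔ l ∈ V)) then bv T else 0 := by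
  induction ls with
  | nil => simp
  | cons l ls ih =>
    rw [List.map_cons, List.prod_cons, ContinuousLinearMap.mul_apply, ih]
    by_cases hc : ∀ x ∈ ls, (x ∈ T ↔ x ∈ V)
    · rw [if_pos hc]
      by_cases hlV : l ∈ V
      · by_cases hlT : l ∈ T
        · have h2 : ∀ x ∈ l :: ls, (x ∈ T ↔ x ∈ V) := by
            intro x hx; rcases List.mem_cons.1 hx with rfl | hx
            · simp [hlV, hlT]
            · exact hc x hx
          rw [if_pos h2, if_pos hlV, numOp_bv, if_pos hlT]
        · have h2 : ¬ ∀ x ∈ l :: ls, (x ∈ T ↔ x ∈ V) := by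
            intro h; exact hlT ((h l (List.mem_cons_self)).2 hlV)
          rw [if_neg h2, if_pos hlV, numOp_bv, if_neg hlT]
      · by_cases hlT : l ∈ T
        · have h2 : ¬ ∀ x ∈ l :: ls, (x ∈ T ↔ x ∈ V) := by
            intro h; exact hlV ((h l (List.mem_cons_self)).1 hlT)
          rw [if_neg h2, if_neg hlV, holeOp_bv, if_pos hlT]
        · have h2 : ∀ x ∈ l :: ls, (x ∈ T ↔ x ∈ V) := by
            intro x hx; rcases List.mem_cons.1 hx with rfl | hx
            · simp [hlV, hlT]
            · exact hc x hx
          rw [if_pos h2, if_neg hlV, holeOp_bv, if_neg hlT]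
    · have h2 : ¬ ∀ x ∈ l :: ls, (x ∈ T ↔ x ∈ V) := by
        intro h; exact hc (fun x hx => h x (List.mem_cons_of_mem l hx))
      rw [if_neg hc, if_neg h2, map_zero]

lemma projOp_bv {I V : Finset L} (hV : V ⊆ I) (T : Finset L) :
    projOp I V (bv T) = if T ∩ I = V then bv T else 0 := by
  rw [projOp, projList_bv]
  congr 1
  simp only [Finset.mem_toList, eq_iff_iff]
  constructor
  · intro h
    apply Finset.ext
    intro x
    simp only [Finset.mem_inter]
    constructor
    · rintro ⟨hxT, hxI⟩; exact (h x hxI).1 hxT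
    · intro hxV; exact ⟨(h x (hV hxV)).2 hxV, hV hxV⟩
  · intro h l hlI
    constructor
    · intro hlT
      have : l ∈ T ∩ I := Finset.mem_inter.2 ⟨hlT, hlI⟩
      rwa [h] at this
    · intro hlV
      have : l ∈ T ∩ I := h ▸ hlV
      exact (Finset.mem_inter.1 this).1

def IsSign (s : ℂ) : Prop := s = 1 ∨ s = -1

lemma IsSign.ne_zero {s : ℂ} (h : IsSign s) : s ≠ 0 := by
  rcases h with rfl | rfl <;> norm_num

lemma IsSign.mul {s t : ℂ} (hs : IsSign s) (ht : IsSign t) : IsSign (s * t) := by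
  rcases hs with rfl | rfl <;> rcases ht with rfl | rfl <;> simp [IsSign]

lemma jwSign_isSign (l : L) (S : Finset L) : IsSign (jwSign l S) := jwSign_cases l S

lemma annList_bv (N : List L) (T : Finset L) (hnd : N.Nodup) (hsub : N.toFinset ⊆ T) :
    ∃ s : ℂ, IsSign s ∧ ((N.map ann).prod) (bv T) = s • bv (T \ N.toFinset) := by
  induction N with
  | nil => exact ⟨1, Or.inl rfl, by simp⟩
  | cons l N ih =>
    have hndN : N.Nodup := hnd.of_cons
    have hsubN : N.toFinset ⊆ T := by
      intro x hx
      exact hsub (by simp [List.mem_toFinset] at hx ⊢; exact Or.inr hx)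
    obtain ⟨s, hs, hrec⟩ := ih hndN hsubN
    have hlT : l ∈ T := hsub (by simp)
    have hlN : l ∉ N.toFinset := by
      simp only [List.mem_toFinset]
      exact (List.nodup_cons.1 hnd).1
    have hmem : l ∈ T \ N.toFinset := Finset.mem_sdiff.2 ⟨hlT, hlN⟩
    have herase : (T \ N.toFinset).erase l = T \ (l :: N).toFinset := by
      ext x
      simp only [Finset.mem_erase, Finset.mem_sdiff, List.toFinset_cons, Finset.mem_insert]
      tauto
    refine ⟨jwSign l ((T \ N.toFinset).erase l) * s, (jwSign_isSign _ _).mul hs, ?_⟩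
    rw [List.map_cons, List.prod_cons, ContinuousLinearMap.mul_apply, hrec, map_smul,
      ann_bv, if_pos hmem, herase, smul_smul, mul_comm]

lemma creList_bv (M : List L) (T : Finset L) (hnd : M.Nodup) (hdis : ∀ x ∈ M, x ∉ T) :
    ∃ s : ℂ, IsSign s ∧ ((M.map cre).prod) (bv T) = s • bv (T ∪ M.toFinset) := by
  induction M with
  | nil => exact ⟨1, Or.inl rfl, by simp⟩
  | cons l M ih =>
    obtain ⟨s, hs, hrec⟩ := ih hnd.of_cons (fun x hx => hdis x (List.mem_cons_of_mem l hx))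
    have hl : l ∉ T ∪ M.toFinset := by
      simp only [Finset.mem_union, List.mem_toFinset]
      rintro (h | h)
      · exact hdis l (List.mem_cons_self) h
      · exact (List.nodup_cons.1 hnd).1 h
    have hins : insert l (T ∪ M.toFinset) = T ∪ (l :: M).toFinset := by
      ext x
      simp only [Finset.mem_insert, Finset.mem_union, List.toFinset_cons]
      tauto
    refine ⟨jwSign l (T ∪ M.toFinset) * s, (jwSign_isSign _ _).mul hs, ?_⟩
    rw [List.map_cons, List.prod_cons, ContinuousLinearMap.mul_apply, hrec, map_smul,
      cre_bv, if_neg hl, hins, smul_smul, mul_comm]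

lemma fvec_eq (M : List L) (hnd : M.Nodup) : ∃ s : ℂ, IsSign s ∧ fvec M = s • bv M.toFinset := by
  induction M with
  | nil => exact ⟨1, Or.inl rfl, by simp [fvec, vac, bv]⟩
  | cons l M ih =>
    obtain ⟨s, hs, hrec⟩ := ih hnd.of_cons
    have hl : l ∉ M.toFinset := by
      simp only [List.mem_toFinset]; exact (List.nodup_cons.1 hnd).1
    refine ⟨jwSign l M.toFinset * s, (jwSign_isSign _ _).mul hs, ?_⟩
    have hfold : fvec (l :: M) = cre l (fvec M) := rfl
    rw [hfold, hrec, map_smul, cre_bv, if_neg hl, smul_smul, mul_comm, List.toFinset_cons]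

lemma ann_mem {I : Finset L} {l : L} (hl : l ∈ I) : ann l ∈ A I :=
  StarAlgebra.subset_adjoin ℂ _ ⟨l, hl, rfl⟩

lemma cre_mem {I : Finset L} {l : L} (hl : l ∈ I) : cre l ∈ A I := by
  have : cre l = star (ann l) := by
    rw [ContinuousLinearMap.star_eq_adjoint, ann, ContinuousLinearMap.adjoint_adjoint]
  rw [this]
  exact star_mem (ann_mem hl)

lemma annProd_mem {I : Finset L} {N : List L} (h : ∀ x ∈ N, x ∈ I) :
    ((N.map ann).prod) ∈ A I := by
  apply list_prod_mem
  intro x hx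
  obtain ⟨l, hl, rfl⟩ := List.mem_map.1 hx
  exact ann_mem (h l hl)

lemma creProd_mem {I : Finset L} {M : List L} (h : ∀ x ∈ M, x ∈ I) :
    ((M.map cre).prod) ∈ A I := by
  apply list_prod_mem
  intro x hx
  obtain ⟨l, hl, rfl⟩ := List.mem_map.1 hx
  exact cre_mem (h l hl)

lemma projOp_mem {I V : Finset L} : projOp I V ∈ A I := by
  apply list_prod_mem
  intro x hx
  obtain ⟨l, hl, rfl⟩ := List.mem_map.1 hx
  rw [Finset.mem_toList] at hl
  by_cases hV : l ∈ V
  · simp only [hV, if_true]; exact mul_mem (cre_mem hl) (ann_mem hl)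
  · simp only [hV, if_false]; exact mul_mem (ann_mem hl) (cre_mem hl)

lemma Phi_eq {D : Finset L → List L} {p : Finset L → ℝ} {I : Finset L} {ι : L → L}
    (hD : IsEnum D) (hinj : Set.InjOn ι (I : Set L))
    (hdisj : Disjoint I (I.image ι)) :
    ∃ γ : Finset L → ℂ, (∀ S ∈ I.powerset, IsSign (γ S)) ∧
      Phi D p I ι = ∑ S ∈ I.powerset,
        ((Real.sqrt (p S) : ℂ) * γ S) • bv (S ∪ S.image ι) := by
  have h : ∀ S : Finset L, ∃ s : ℂ, S ∈ I.powerset →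
      IsSign s ∧ fvec (D S ++ (D S).map ι) = s • bv (S ∪ S.image ι) := by
    intro S
    by_cases hS : S ∈ I.powerset
    · have hSI : S ⊆ I := Finset.mem_powerset.1 hS
      have hnd1 : (D S).Nodup := (hD S).1
      have htf : (D S).toFinset = S := (hD S).2
      have hmemI : ∀ x ∈ D S, x ∈ I := by
        intro x hx
        exact hSI (htf ▸ List.mem_toFinset.2 hx)
      have hnd2 : ((D S).map ι).Nodup := by
        apply List.Nodup.map_on _ hnd1
        intro x hx y hy hxy
        exact hinj (hmemI x hx) (hmemI y hy) hxy
      have hnd : (D S ++ (D S).map ι).Nodup := by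
        rw [List.nodup_append]
        refine ⟨hnd1, hnd2, ?_⟩
        rintro x hx _ hx2 rfl
        obtain ⟨y, hy, rfl⟩ := List.mem_map.1 hx2
        have h1 : ι y ∈ I := hmemI _ hx
        have h2 : ι y ∈ I.image ι := Finset.mem_image_of_mem ι (hmemI y hy)
        exact (Finset.disjoint_left.1 hdisj h1) h2
      obtain ⟨s, hs, heq⟩ := fvec_eq _ hnd
      refine ⟨s, fun _ => ⟨hs, ?_⟩⟩
      rw [heq]
      congr 1
      have himg : (List.map ι (D S)).toFinset = S.image ι := by
        ext x
        simp only [List.mem_toFinset, List.mem_map, Finset.mem_image]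
        constructor
        · rintro ⟨y, hy, rfl⟩; exact ⟨y, htf ▸ List.mem_toFinset.2 hy, rfl⟩
        · rintro ⟨y, hy, rfl⟩; exact ⟨y, by rw [← htf] at hy; exact List.mem_toFinset.1 hy, rfl⟩
      rw [List.toFinset_append, htf, himg]
    · exact ⟨1, fun h => absurd h hS⟩
  choose γ hγ using h
  refine ⟨γ, fun S hS => (hγ S hS).1, ?_⟩
  rw [Phi]
  apply Finset.sum_congr rfl
  intro S hS
  rw [(hγ S hS).2, smul_smul]

def chi (R W : Finset L) : ℂ := ∏ j ∈ W, (-1 : ℂ) ^ ((R.filter (fun k => k < j)).card)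

lemma chi_isSign (R W : Finset L) : IsSign (chi R W) := by
  apply Finset.prod_induction _ IsSign (fun a b ha hb => ha.mul hb) (Or.inl rfl)
  intro j _
  rcases Nat.even_or_odd ((R.filter (fun k => k < j)).card) with h | h
  · exact Or.inl h.neg_one_pow
  · exact Or.inr h.neg_one_pow

lemma chi_mul_self (R W : Finset L) : chi R W * chi R W = 1 := by
  rcases chi_isSign R W with h | h <;> rw [h] <;> norm_num

lemma chi_insert {R W : Finset L} {j : L} (hj : j ∉ W) :
    chi R (insert j W) = (-1 : ℂ) ^ ((R.filter (fun k => k < j)).card) * chi R W :=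
  Finset.prod_insert hj

lemma jwSign_union {R Y : Finset L} (j : L) (h : Disjoint R Y) :
    jwSign j (R ∪ Y) = (-1 : ℂ) ^ ((R.filter (fun k => k < j)).card) * jwSign j Y := by
  rw [jwSign, jwSign, Finset.filter_union, Finset.card_union_of_disjoint
    (Finset.disjoint_filter_filter h), pow_add]

lemma union_cancel {R A B : Finset L} (hA : Disjoint R A) (hB : Disjoint R B) :
    R ∪ A = R ∪ B ↔ A = B := by
  constructor
  · intro h
    ext x
    constructor
    · intro hx
      have h1 : x ∈ R ∪ B := h ▸ Finset.mem_union_right R hx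
      rcases Finset.mem_union.1 h1 with h2 | h2
      · exact absurd hx (Finset.disjoint_left.1 hA h2)
      · exact h2
    · intro hx
      have h1 : x ∈ R ∪ A := h ▸ Finset.mem_union_right R hx
      rcases Finset.mem_union.1 h1 with h2 | h2
      · exact absurd hx (Finset.disjoint_left.1 hB h2)
      · exact h2
  · intro h; rw [h]

lemma expand_bv (v : FockSpace L) : v = ∑ T : Finset L, v T • bv T := by
  apply PiLp.ext
  intro T'
  have h : (∑ T : Finset L, v T • bv T) T' = ∑ T : Finset L, (v T • bv T) T' :=
    by rw [WithLp.ofLp_sum, Finset.sum_apply]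
  rw [h]
  simp [bv, EuclideanSpace.single_apply]

lemma entry_mul (x y : FockSpace L →L[ℂ] FockSpace L) (X Z : Finset L) :
    ⟪bv X, (x * y) (bv Z)⟫_ℂ
      = ∑ T : Finset L, ⟪bv T, y (bv Z)⟫_ℂ * ⟪bv X, x (bv T)⟫_ℂ := by
  rw [ContinuousLinearMap.mul_apply]
  conv_lhs => rw [expand_bv (y (bv Z))]
  rw [map_sum, inner_sum]
  apply Finset.sum_congr rfl
  intro T _
  rw [map_smul, inner_smul_right, coord_eq_inner, coord_eq_inner]

lemma conj_isSign {s : ℂ} (h : IsSign s) : conj s = s := by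
  rcases h with rfl | rfl <;> simp

lemma entry_ann (j : L) (X Z : Finset L) :
    ⟪bv X, ann j (bv Z)⟫_ℂ
      = if j ∈ Z ∧ X = Z.erase j then jwSign j (Z.erase j) else 0 := by
  rw [ann_bv]
  by_cases hj : j ∈ Z
  · rw [if_pos hj, inner_smul_right, inner_bv]
    by_cases hX : X = Z.erase j
    · rw [if_pos hX, if_pos ⟨hj, hX⟩, mul_one]
    · rw [if_neg hX, if_neg (fun h => hX h.2), mul_zero]
  · rw [if_neg hj, inner_zero_right, if_neg (fun h => hj h.1)]
    
lemma erase_sdiff_of_mem {J Z : Finset L} {j : L} (hj : j ∈ J) :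
    (Z.erase j) \ J = Z \ J := by
  ext x
  simp only [Finset.mem_sdiff, Finset.mem_erase]
  constructor
  · rintro ⟨⟨_, h1⟩, h2⟩; exact ⟨h1, h2⟩
  · rintro ⟨h1, h2⟩; exact ⟨⟨fun he => h2 (he ▸ hj), h1⟩, h2⟩

lemma entries_struct {J : Finset L} {d : FockSpace L →L[ℂ] FockSpace L} (hd : d ∈ A J) :
    (∀ X Z : Finset L, X \ J ≠ Z \ J → ⟪bv X, d (bv Z)⟫_ℂ = 0) ∧
    (∀ R Y Y' : Finset L, Disjoint R J → Y ⊆ J → Y' ⊆ J →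
      ⟪bv (R ∪ Y), d (bv (R ∪ Y'))⟫_ℂ = chi R Y * chi R Y' * ⟪bv Y, d (bv Y')⟫_ℂ) := by
  have hd' : d ∈ StarAlgebra.adjoin ℂ (ann '' ((J : Finset L) : Set L)) := hd
  clear hd
  induction hd' using StarAlgebra.adjoin_induction with
  | mem x hx =>
    obtain ⟨j, hjJ, rfl⟩ := hx
    have hjJ' : j ∈ J := hjJ
    constructor
    · intro X Z hXZ
      rw [entry_ann]
      by_cases h : j ∈ Z ∧ X = Z.erase j
      · exact absurd (h.2 ▸ erase_sdiff_of_mem hjJ') hXZ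
      · rw [if_neg h]
    · intro R Y Y' hR hY hY'
      have hjR : j ∉ R := Finset.disjoint_right.1 hR hjJ'
      rw [entry_ann, entry_ann]
      by_cases hjY' : j ∈ Y'
      · have hjRY' : j ∈ R ∪ Y' := Finset.mem_union_right R hjY'
        have herase : (R ∪ Y').erase j = R ∪ (Y'.erase j) := by
          ext x
          simp only [Finset.mem_erase, Finset.mem_union]
          constructor
          · rintro ⟨hne, h | h⟩
            · exact Or.inl h
            · exact Or.inr ⟨hne, h⟩
          · rintro (h | h)
            · exact ⟨fun he => hjR (he ▸ h), Or.inl h⟩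
            · exact ⟨h.1, Or.inr h.2⟩
        by_cases hYe : Y = Y'.erase j
        · have hY'i : Y' = insert j Y := by
            rw [hYe, Finset.insert_erase hjY']
          have hjY : j ∉ Y := hYe ▸ Finset.notMem_erase j Y'
          have hcond : R ∪ Y = (R ∪ Y').erase j := by rw [herase, hYe]
          rw [if_pos ⟨hjRY', hcond⟩, if_pos ⟨hjY', hYe⟩, herase, ← hYe]
          have hdisjRY : Disjoint R Y := Finset.disjoint_of_subset_right hY hR
          rw [jwSign_union j hdisjRY]
          have : chi R Y' = (-1 : ℂ) ^ ((R.filter (fun k => k < j)).card) * chi R Y := by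
            rw [hY'i, chi_insert hjY]
          rw [this]
          have hsq := chi_mul_self R Y
          calc (-1 : ℂ) ^ ((R.filter (fun k => k < j)).card) * jwSign j Y
              = (chi R Y * chi R Y) * ((-1 : ℂ) ^ ((R.filter (fun k => k < j)).card) * jwSign j Y) := by
                rw [hsq, one_mul]
            _ = chi R Y * ((-1 : ℂ) ^ ((R.filter (fun k => k < j)).card) * chi R Y) * jwSign j Y := by
                ring
        · have h1 : ¬ (j ∈ R ∪ Y' ∧ R ∪ Y = (R ∪ Y').erase j) := by
            rintro ⟨_, hc⟩
            rw [herase] at hc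
            have hdisj1 : Disjoint R Y := Finset.disjoint_of_subset_right hY hR
            have hdisj2 : Disjoint R (Y'.erase j) :=
              Finset.disjoint_of_subset_right ((Finset.erase_subset j Y').trans hY') hR
            exact hYe ((union_cancel hdisj1 hdisj2).1 hc)
          rw [if_neg h1, if_neg (fun h => hYe h.2), mul_zero]
      · have h1 : ¬ (j ∈ R ∪ Y' ∧ R ∪ Y = (R ∪ Y').erase j) := by
          rintro ⟨hc, _⟩
          rcases Finset.mem_union.1 hc with h | h
          · exact hjR h
          · exact hjY' h
        rw [if_neg h1, if_neg (fun h => hjY' h.1), mul_zero]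
  | algebraMap r =>
    have hact : ∀ W : Finset L, (algebraMap ℂ (FockSpace L →L[ℂ] FockSpace L) r) (bv W) = r • bv W := by
      intro W
      rw [Algebra.algebraMap_eq_smul_one, ContinuousLinearMap.smul_apply, ContinuousLinearMap.one_apply]
    constructor
    · intro X Z hXZ
      rw [hact, inner_smul_right, inner_bv]
      have : X ≠ Z := fun h => hXZ (h ▸ rfl)
      rw [if_neg this, mul_zero]
    · intro R Y Y' hR hY hY'
      rw [hact, hact, inner_smul_right, inner_smul_right, inner_bv, inner_bv]
      have hdisj1 : Disjoint R Y := Finset.disjoint_of_subset_right hY hR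
      have hdisj2 : Disjoint R Y' := Finset.disjoint_of_subset_right hY' hR
      by_cases hYY : Y = Y'
      · subst hYY
        rw [if_pos rfl, if_pos rfl, chi_mul_self]
        ring
      · rw [if_neg hYY, if_neg (fun h => hYY ((union_cancel hdisj1 hdisj2).1 h))]
        ring
  | add x y hx hy ihx ihy =>
    constructor
    · intro X Z hXZ
      rw [ContinuousLinearMap.add_apply, inner_add_right, ihx.1 X Z hXZ, ihy.1 X Z hXZ, add_zero]
    · intro R Y Y' hR hY hY'
      rw [ContinuousLinearMap.add_apply, ContinuousLinearMap.add_apply, inner_add_right,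
        inner_add_right, ihx.2 R Y Y' hR hY hY', ihy.2 R Y Y' hR hY hY']
      ring
  | mul x y hx hy ihx ihy =>
    constructor
    · intro X Z hXZ
      rw [entry_mul]
      apply Finset.sum_eq_zero
      intro T _
      by_cases hT : T \ J = Z \ J
      · have : X \ J ≠ T \ J := fun h => hXZ (h.trans hT)
        rw [ihx.1 X T this, mul_zero]
      · rw [ihy.1 T Z hT, zero_mul]
    · intro R Y Y' hR hY hY'
      rw [entry_mul, entry_mul]
      set c := chi R Y * chi R Y' with hc
      set g : Finset L → ℂ := fun T' => ⟪bv T', y (bv Y')⟫_ℂ * ⟪bv Y, x (bv T')⟫_ℂ with hg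
      have hYJ' : Y' \ J = ∅ := Finset.sdiff_eq_empty_iff_subset.2 hY'
      have hYJ : Y \ J = ∅ := Finset.sdiff_eq_empty_iff_subset.2 hY
      have hRJ : R \ J = R := sdiff_eq_left.2 hR
      have hRY' : (R ∪ Y') \ J = R := by
        rw [Finset.union_sdiff_distrib, hYJ', hRJ, Finset.union_empty]
      have step1 : ∀ T : Finset L,
          ⟪bv T, y (bv (R ∪ Y'))⟫_ℂ * ⟪bv (R ∪ Y), x (bv T)⟫_ℂ
            = if T \ J = R then c * g (T ∩ J) else 0 := by
        intro T
        by_cases hT : T \ J = R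
        · have hsplit : T = R ∪ (T ∩ J) := by
            conv_lhs => rw [← Finset.sdiff_union_inter T J]
            rw [hT]
          rw [if_pos hT]
          conv_lhs => rw [hsplit]
          rw [ihy.2 R (T ∩ J) Y' hR Finset.inter_subset_right hY',
            ihx.2 R Y (T ∩ J) hR hY Finset.inter_subset_right]
          have hsq := chi_mul_self R (T ∩ J)
          calc (chi R (T ∩ J) * chi R Y' * ⟪bv (T ∩ J), y (bv Y')⟫_ℂ)
                * (chi R Y * chi R (T ∩ J) * ⟪bv Y, x (bv (T ∩ J))⟫_ℂ)
              = (chi R (T ∩ J) * chi R (T ∩ J)) * (c * g (T ∩ J)) := by rw [hc, hg]; ring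
            _ = c * g (T ∩ J) := by rw [hsq, one_mul]
        · rw [if_neg hT, ihy.1 T (R ∪ Y') (by rw [hRY']; exact hT), zero_mul]
      have step2 : ∀ T' : Finset L,
          c * (⟪bv T', y (bv Y')⟫_ℂ * ⟪bv Y, x (bv T')⟫_ℂ)
            = if T' \ J = ∅ then c * g T' else 0 := by
        intro T'
        by_cases hT' : T' \ J = ∅
        · rw [if_pos hT']
        · rw [if_neg hT', ihy.1 T' Y' (by rw [hYJ']; exact hT'), zero_mul, mul_zero]
      calc ∑ T : Finset L, ⟪bv T, y (bv (R ∪ Y'))⟫_ℂ * ⟪bv (R ∪ Y), x (bv T)⟫_ℂ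
          = ∑ T : Finset L, if T \ J = R then c * g (T ∩ J) else 0 :=
            Finset.sum_congr rfl (fun T _ => step1 T)
        _ = ∑ T ∈ Finset.univ.filter (fun T => T \ J = R), c * g (T ∩ J) :=
            (Finset.sum_filter _ _).symm
        _ = ∑ T' ∈ Finset.univ.filter (fun T' => T' \ J = ∅), c * g T' := by
            apply Finset.sum_nbij' (i := fun T => T ∩ J) (j := fun T' => R ∪ T')
            · intro T hT
              simp only [Finset.mem_filter, Finset.mem_univ, true_and] at hT ⊢
              exact Finset.sdiff_eq_empty_iff_subset.2 Finset.inter_subset_right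
            · intro T' hT'
              simp only [Finset.mem_filter, Finset.mem_univ, true_and] at hT' ⊢
              have hsub : T' ⊆ J := Finset.sdiff_eq_empty_iff_subset.1 hT'
              rw [Finset.union_sdiff_distrib, hRJ, Finset.sdiff_eq_empty_iff_subset.2 hsub,
                Finset.union_empty]
            · intro T hT
              simp only [Finset.mem_filter, Finset.mem_univ, true_and] at hT
              conv_rhs => rw [← Finset.sdiff_union_inter T J]
              rw [hT]
            · intro T' hT'
              simp only [Finset.mem_filter, Finset.mem_univ, true_and] at hT'
              have hsub : T' ⊆ J := Finset.sdiff_eq_empty_iff_subset.1 hT'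
              rw [Finset.union_inter_distrib_right]
              rw [(Finset.inter_eq_left).2 hsub]
              have : R ∩ J = ∅ := Finset.disjoint_iff_inter_eq_empty.1 hR
              rw [this, Finset.empty_union]
            · intro T _; rfl
        _ = ∑ T' : Finset L, if T' \ J = ∅ then c * g T' else 0 := Finset.sum_filter _ _
        _ = ∑ T' : Finset L, c * (⟪bv T', y (bv Y')⟫_ℂ * ⟪bv Y, x (bv T')⟫_ℂ) :=
            Finset.sum_congr rfl (fun T' _ => (step2 T').symm)
        _ = c * ∑ T' : Finset L, ⟪bv T', y (bv Y')⟫_ℂ * ⟪bv Y, x (bv T')⟫_ℂ :=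
            (Finset.mul_sum _ _ _).symm
  | star x hx ihx =>
    constructor
    · intro X Z hXZ
      rw [ContinuousLinearMap.star_eq_adjoint, ContinuousLinearMap.adjoint_inner_right,
        ← inner_conj_symm]
      rw [ihx.1 Z X (Ne.symm hXZ), map_zero]
    · intro R Y Y' hR hY hY'
      rw [ContinuousLinearMap.star_eq_adjoint, ContinuousLinearMap.adjoint_inner_right,
        ← inner_conj_symm, ihx.2 R Y' Y hR hY' hY, map_mul, map_mul,
        conj_isSign (chi_isSign R Y'), conj_isSign (chi_isSign R Y), inner_conj_symm,
        ← ContinuousLinearMap.adjoint_inner_right, ← ContinuousLinearMap.star_eq_adjoint]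
      ring


lemma aUV_spec {I : Finset L} (D : Finset L → List L) (hD : IsEnum D) {U V : Finset L}
    (hU : U ⊆ I) (hV : V ⊆ I) :
    ∃ a : FockSpace L →L[ℂ] FockSpace L, a ∈ A I ∧
      (∀ T : Finset L, T ∩ I ≠ V → a (bv T) = 0) ∧
      (∀ T : Finset L, T ∩ I = V → ∃ s : ℂ, IsSign s ∧ a (bv T) = s • bv (U ∪ (T \ I))) := by
  have hUnd : (D U).Nodup := (hD U).1
  have hUtf : (D U).toFinset = U := (hD U).2
  have hVnd : (D V).Nodup := (hD V).1
  have hVtf : (D V).toFinset = V := (hD V).2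
  refine ⟨((D U).map cre).prod * ((((D V).map ann).prod) * projOp I V), ?_, ?_, ?_⟩
  · refine mul_mem (creProd_mem ?_) (mul_mem (annProd_mem ?_) projOp_mem)
    · intro x hx; exact hU (hUtf ▸ List.mem_toFinset.2 hx)
    · intro x hx; exact hV (hVtf ▸ List.mem_toFinset.2 hx)
  · intro T hT
    show ((D U).map cre).prod (((D V).map ann).prod ((projOp I V) (bv T))) = 0
    rw [projOp_bv hV, if_neg hT, map_zero, map_zero]
  · intro T hT
    have hshow : ∀ v, (((D U).map cre).prod * ((((D V).map ann).prod) * projOp I V)) v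
        = ((D U).map cre).prod (((D V).map ann).prod ((projOp I V) v)) := fun _ => rfl
    rw [hshow, projOp_bv hV, if_pos hT]
    have hVT : (D V).toFinset ⊆ T := by
      rw [hVtf, ← hT]; exact Finset.inter_subset_left
    obtain ⟨s1, hs1, he1⟩ := annList_bv (D V) T hVnd hVT
    rw [he1, map_smul]
    have hTV : T \ (D V).toFinset = T \ I := by
      rw [hVtf, ← hT, Finset.sdiff_inter_self_left]
    rw [hTV]
    have hUdis : ∀ x ∈ D U, x ∉ T \ I := by
      intro x hx hmem
      exact (Finset.mem_sdiff.1 hmem).2 (hU (hUtf ▸ List.mem_toFinset.2 hx))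
    obtain ⟨s2, hs2, he2⟩ := creList_bv (D U) (T \ I) hUnd hUdis
    rw [he2, smul_smul, hUtf, Finset.union_comm]
    exact ⟨s1 * s2, hs1.mul hs2, rfl⟩

lemma inner_apply_expand (u : FockSpace L) (a : FockSpace L →L[ℂ] FockSpace L) (w : FockSpace L) :
    ⟪u, a w⟫_ℂ = ∑ T : Finset L, w T * ⟪u, a (bv T)⟫_ℂ := by
  conv_lhs => rw [expand_bv w]
  rw [map_sum, inner_sum]
  exact Finset.sum_congr rfl (fun T _ => by rw [map_smul, inner_smul_right])

lemma key_zero {I : Finset L} {ι : L → L} {D : Finset L → List L} {p : Finset L → ℝ}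
    (hD : IsEnum D) (hinj : Set.InjOn ι (I : Set L)) (hdisj : Disjoint I (I.image ι))
    (hppos : ∀ S ∈ I.powerset, 0 < p S)
    {d : FockSpace L →L[ℂ] FockSpace L} (hd : d ∈ A (I.image ι))
    (hzero : ∀ a : FockSpace L →L[ℂ] FockSpace L, a ∈ A I →
      ⟪Phi D p I ι, (a * d) (Phi D p I ι)⟫_ℂ = 0) :
    d = 0 := by
  set J := I.image ι with hJ
  obtain ⟨γ, hγ, hPhi⟩ := Phi_eq (p := p) hD hinj hdisj
  set c : Finset L → ℂ := fun S => (Real.sqrt (p S) : ℂ) * γ S with hcdef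
  have hcne : ∀ S ∈ I.powerset, c S ≠ 0 := by
    intro S hS
    apply mul_ne_zero
    · simp only [hcdef, Complex.ofReal_ne_zero]
      exact ne_of_gt (Real.sqrt_pos.2 (hppos S hS))
    · exact (hγ S hS).ne_zero
  have hsubJ : ∀ {S : Finset L}, S ⊆ I → S.image ι ⊆ J := fun hS => Finset.image_subset_image hS
  have hcapI : ∀ {S T : Finset L}, S ⊆ I → T ⊆ J → (S ∪ T) ∩ I = S := by
    intro S T hS hT
    rw [Finset.union_inter_distrib_right, Finset.inter_eq_left.2 hS]
    have h1 : T ∩ I = ∅ := Finset.disjoint_iff_inter_eq_empty.1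
      (Finset.disjoint_of_subset_left hT hdisj.symm)
    rw [h1, Finset.union_empty]
  have hsdI : ∀ {S T : Finset L}, S ⊆ I → T ⊆ J → (S ∪ T) \ I = T := by
    intro S T hS hT
    rw [Finset.union_sdiff_distrib, Finset.sdiff_eq_empty_iff_subset.2 hS,
      sdiff_eq_left.2 (Finset.disjoint_of_subset_left hT hdisj.symm),
      Finset.empty_union]
  have hsdJ : ∀ {S T : Finset L}, S ⊆ I → T ⊆ J → (S ∪ T) \ J = S := by
    intro S T hS hT
    rw [Finset.union_sdiff_distrib, Finset.sdiff_eq_empty_iff_subset.2 hT,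
      sdiff_eq_left.2 (Finset.disjoint_of_subset_left hS hdisj),
      Finset.union_empty]
  have hPB : ∀ X : Finset L, ⟪Phi D p I ι, bv X⟫_ℂ
      = ∑ S ∈ I.powerset, conj (c S) * (if S ∪ S.image ι = X then 1 else 0) := by
    intro X
    rw [hPhi, sum_inner]
    apply Finset.sum_congr rfl
    intro S _
    rw [inner_smul_left, inner_bv]
  have hPB0 : ∀ X : Finset L, ((X ∩ I) ∪ (X ∩ I).image ι ≠ X) → ⟪Phi D p I ι, bv X⟫_ℂ = 0 := by
    intro X hX
    rw [hPB]
    apply Finset.sum_eq_zero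
    intro S hS
    have hne : S ∪ S.image ι ≠ X := by
      intro h
      apply hX
      have hSI : S ⊆ I := Finset.mem_powerset.1 hS
      have h2 : X ∩ I = S := by rw [← h]; exact hcapI hSI (hsubJ hSI)
      rw [h2, h]
    rw [if_neg hne, mul_zero]
  have hPB1 : ∀ S : Finset L, S ∈ I.powerset →
      ⟪Phi D p I ι, bv (S ∪ S.image ι)⟫_ℂ = conj (c S) := by
    intro S hS
    rw [hPB, Finset.sum_eq_single_of_mem S hS]
    · rw [if_pos rfl, mul_one]
    · intro S' hS' hne
      have h : S' ∪ S'.image ι ≠ S ∪ S.image ι := by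
        intro h
        apply hne
        have h1 : S' ⊆ I := Finset.mem_powerset.1 hS'
        have h2 : S ⊆ I := Finset.mem_powerset.1 hS
        rw [← hcapI h1 (hsubJ h1), ← hcapI h2 (hsubJ h2), h]
      rw [if_neg h, mul_zero]
  have hstruct := entries_struct hd
  have step1 : ∀ U V : Finset L, U ⊆ I → V ⊆ I →
      ⟪bv (U.image ι), d (bv (V.image ι))⟫_ℂ = 0 := by
    intro U V hU hV
    obtain ⟨a, haA, ha0, ha1⟩ := aUV_spec D hD hU hV
    have hz := hzero a haA
    rw [ContinuousLinearMap.mul_apply] at hz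
    set w := d (Phi D p I ι) with hw
    set T0 := V ∪ U.image ι with hT0def
    have hT0I : T0 ∩ I = V := hcapI hV (hsubJ hU)
    have hT0sd : T0 \ I = U.image ι := hsdI hV (hsubJ hU)
    have hU' : U ∈ I.powerset := Finset.mem_powerset.2 hU
    have hV' : V ∈ I.powerset := Finset.mem_powerset.2 hV
    have hTval : ∀ T : Finset L, T ≠ T0 → ⟪Phi D p I ι, a (bv T)⟫_ℂ = 0 := by
      intro T hne
      by_cases hTI : T ∩ I = V
      · obtain ⟨s, hs, he⟩ := ha1 T hTI
        rw [he, inner_smul_right]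
        have hX : ((U ∪ (T \ I)) ∩ I) ∪ ((U ∪ (T \ I)) ∩ I).image ι ≠ U ∪ (T \ I) := by
          intro h
          have hdisTI : Disjoint U (T \ I) :=
            Finset.disjoint_of_subset_left hU Finset.sdiff_disjoint.symm
          have hcap : (U ∪ (T \ I)) ∩ I = U := by
            rw [Finset.union_inter_distrib_right, Finset.inter_eq_left.2 hU]
            have h1 : (T \ I) ∩ I = ∅ :=
              Finset.disjoint_iff_inter_eq_empty.1 Finset.sdiff_disjoint
            rw [h1, Finset.union_empty]
          rw [hcap] at h
          have hdisU : Disjoint U (U.image ι) :=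
            Finset.disjoint_of_subset_left hU
              (Finset.disjoint_of_subset_right (hsubJ hU) hdisj)
          have hTd : U.image ι = T \ I := (union_cancel hdisU hdisTI).1 h
          have hTsplit : T = (T ∩ I) ∪ (T \ I) := by
            rw [Finset.union_comm, Finset.sdiff_union_inter]
          rw [hTI, ← hTd] at hTsplit
          exact hne hTsplit
        rw [hPB0 _ hX, mul_zero]
      · rw [ha0 T hTI, inner_zero_right]
    obtain ⟨s, hs, he⟩ := ha1 T0 hT0I
    have hval : ⟪Phi D p I ι, a (bv T0)⟫_ℂ = s * conj (c U) := by
      rw [he, inner_smul_right, hT0sd, hPB1 U hU']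
    have hsum : ⟪Phi D p I ι, a w⟫_ℂ = w T0 * (s * conj (c U)) := by
      rw [inner_apply_expand, Finset.sum_eq_single_of_mem T0 (Finset.mem_univ _)]
      · rw [hval]
      · intro T _ hne
        rw [hTval T hne, mul_zero]
    have h0 : w T0 * (s * conj (c U)) = 0 := by rw [← hsum]; exact hz
    have hcU : conj (c U) ≠ 0 := by
      intro h
      apply hcne U hU'
      have h2 := congrArg conj h
      simpa using h2
    have hwT0 : w T0 = 0 := by
      rcases mul_eq_zero.1 h0 with h | h
      · exact h
      · exact absurd h (mul_ne_zero hs.ne_zero hcU)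
    have hxp : ⟪bv T0, d (Phi D p I ι)⟫_ℂ
        = ∑ S' ∈ I.powerset, c S' * ⟪bv T0, d (bv (S' ∪ S'.image ι))⟫_ℂ := by
      conv_lhs => rw [hPhi]
      rw [map_sum, inner_sum]
      exact Finset.sum_congr rfl (fun S' _ => by rw [map_smul, inner_smul_right])
    have hxp0 : ∑ S' ∈ I.powerset, c S' * ⟪bv T0, d (bv (S' ∪ S'.image ι))⟫_ℂ = 0 := by
      rw [← hxp, coord_eq_inner]
      exact hwT0
    have hT0J : T0 \ J = V := hsdJ hV (hsubJ hU)
    have hsingle : c V * ⟪bv T0, d (bv (V ∪ V.image ι))⟫_ℂ = 0 := by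
      rw [← hxp0]
      symm
      apply Finset.sum_eq_single_of_mem V hV'
      intro S' hS' hne
      have hS'I : S' ⊆ I := Finset.mem_powerset.1 hS'
      have : T0 \ J ≠ (S' ∪ S'.image ι) \ J := by
        rw [hT0J, hsdJ hS'I (hsubJ hS'I)]
        exact fun h => hne h.symm
      rw [hstruct.1 _ _ this, mul_zero]
    have hentry : ⟪bv T0, d (bv (V ∪ V.image ι))⟫_ℂ = 0 := by
      rcases mul_eq_zero.1 hsingle with h | h
      · exact absurd h (hcne V hV')
      · exact h
    have hdisVJ : Disjoint V J := Finset.disjoint_of_subset_left hV hdisj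
    have h2 := hstruct.2 V (U.image ι) (V.image ι) hdisVJ (hsubJ hU) (hsubJ hV)
    rw [← hT0def] at h2
    rw [h2] at hentry
    rcases mul_eq_zero.1 hentry with h | h
    · rcases mul_eq_zero.1 h with h' | h'
      · exact absurd h' (chi_isSign V (U.image ι)).ne_zero
      · exact absurd h' (chi_isSign V (V.image ι)).ne_zero
    · exact h
  have hentryzero : ∀ X Z : Finset L, ⟪bv X, d (bv Z)⟫_ℂ = 0 := by
    intro X Z
    by_cases hXZ : X \ J = Z \ J
    · have hXs : X = (X \ J) ∪ (X ∩ J) := (Finset.sdiff_union_inter X J).symm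
      have hZs : Z = (X \ J) ∪ (Z ∩ J) := by
        rw [hXZ]; exact (Finset.sdiff_union_inter Z J).symm
      have himgX : (I.filter (fun l => ι l ∈ X)).image ι = X ∩ J := by
        ext x
        simp only [Finset.mem_image, Finset.mem_filter, Finset.mem_inter]
        constructor
        · rintro ⟨l, ⟨hlI, hlX⟩, rfl⟩
          exact ⟨hlX, Finset.mem_image_of_mem ι hlI⟩
        · rintro ⟨hxX, hxJ⟩
          obtain ⟨l, hlI, rfl⟩ := Finset.mem_image.1 hxJ
          exact ⟨l, ⟨hlI, hxX⟩, rfl⟩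
      have himgZ : (I.filter (fun l => ι l ∈ Z)).image ι = Z ∩ J := by
        ext x
        simp only [Finset.mem_image, Finset.mem_filter, Finset.mem_inter]
        constructor
        · rintro ⟨l, ⟨hlI, hlZ⟩, rfl⟩
          exact ⟨hlZ, Finset.mem_image_of_mem ι hlI⟩
        · rintro ⟨hxZ, hxJ⟩
          obtain ⟨l, hlI, rfl⟩ := Finset.mem_image.1 hxJ
          exact ⟨l, ⟨hlI, hxZ⟩, rfl⟩
      conv_lhs => rw [hXs, hZs]
      rw [hstruct.2 (X \ J) (X ∩ J) (Z ∩ J) Finset.sdiff_disjoint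
        Finset.inter_subset_right Finset.inter_subset_right]
      rw [← himgX, ← himgZ, step1 _ _ (Finset.filter_subset _ _) (Finset.filter_subset _ _),
        mul_zero]
    · exact hstruct.1 X Z hXZ
  have hbasis : ∀ Z : Finset L, d (bv Z) = 0 := by
    intro Z
    apply PiLp.ext
    intro X
    have h := (coord_eq_inner (d (bv Z)) X).symm
    rw [h, hentryzero X Z]
    rfl
  apply ContinuousLinearMap.ext
  intro v
  rw [expand_bv v, map_sum]
  rw [ContinuousLinearMap.zero_apply]
  apply Finset.sum_eq_zero
  intro T _
  rw [map_smul, hbasis T, smul_zero]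

set_option maxHeartbeats 1000000

/-- Corollary on uniqueness. Assume `p_M > 0` for all `M ∈ D_I`. Let
`τ : A(I) → A(I)` be a linear map and `τ^ι = η ∘ τ ∘ η⁻¹` its copy on `A(ι(I))`, where
`η : A(I) → A(ι(I))` is the *-isomorphism determined by `η(a_l) = a_{ι(l)}` for `l ∈ I`.
If fermionic standard quantum detailed balance holds, i.e. `φ(a τ^ι(b)) = φ(τ(a) b)` for all
`a ∈ A(I)`, `b ∈ A(ι(I))`, then `τ^ι` is the unique map `β : A(ι(I)) → A(ι(I))` satisfying
`φ(a β(b)) = φ(τ(a) b)` for all such `a, b`. -/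
theorem detailed_balance_dual_unique
    {L : Type} [Fintype L] [LinearOrder L]
    (I J : Finset L) (ι : L → L)
    (hinj : Set.InjOn ι (I : Set L)) (himg : I.image ι = J) (hIJ : Disjoint I J)
    (D : Finset L → List L) (hD : IsEnum D)
    (p : Finset L → ℝ)
    (hppos : ∀ S ∈ I.powerset, 0 < p S) (hp1 : ∑ S ∈ I.powerset, p S = 1)
    (τ : A I →ₗ[ℂ] A I)
    (η : A I ≃⋆ₐ[ℂ] A (I.image ι))
    (hη : ∀ l ∈ I, ∀ (hl : ann l ∈ A I),
      ((η ⟨ann l, hl⟩ : A (I.image ι)) : FockSpace L →L[ℂ] FockSpace L) = ann (ι l))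
    -- fermionic standard quantum detailed balance for `(A(I), ρ_I, τ)`:
    (hdb : ∀ (a : A I) (b : A (I.image ι)),
      phi D p I ι ((a : FockSpace L →L[ℂ] FockSpace L) * (η (τ (η.symm b))))
        = phi D p I ι ((τ a : FockSpace L →L[ℂ] FockSpace L) * b)) :
    ∀ β : A (I.image ι) → A (I.image ι),
      (∀ (a : A I) (b : A (I.image ι)),
        phi D p I ι ((a : FockSpace L →L[ℂ] FockSpace L) * (β b))
          = phi D p I ι ((τ a : FockSpace L →L[ℂ] FockSpace L) * b)) →
      β = fun b => η (τ (η.symm b)) := by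
  intro β hβ
  funext b
  have hdisj : Disjoint I (I.image ι) := by rw [himg]; exact hIJ
  set d : FockSpace L →L[ℂ] FockSpace L :=
    ((β b : FockSpace L →L[ℂ] FockSpace L) - (η (τ (η.symm b)) : FockSpace L →L[ℂ] FockSpace L))
    with hddef
  have hdmem : d ∈ A (I.image ι) := sub_mem (β b).2 (η (τ (η.symm b))).2
  have hzero : ∀ a : FockSpace L →L[ℂ] FockSpace L, a ∈ A I →
      ⟪Phi D p I ι, (a * d) (Phi D p I ι)⟫_ℂ = 0 := by
    intro a ha
    have h1 := hβ ⟨a, ha⟩ b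
    have h2 := hdb ⟨a, ha⟩ b
    have hsplit : a * d = a * (β b : FockSpace L →L[ℂ] FockSpace L)
        - a * (η (τ (η.symm b)) : FockSpace L →L[ℂ] FockSpace L) := by
      rw [hddef, mul_sub]
    rw [hsplit, ContinuousLinearMap.sub_apply, inner_sub_right]
    have e1 : ⟪Phi D p I ι, (a * (β b : FockSpace L →L[ℂ] FockSpace L)) (Phi D p I ι)⟫_ℂ
        = phi D p I ι ((a : FockSpace L →L[ℂ] FockSpace L) * (β b)) := rfl
    have e2 : ⟪Phi D p I ι, (a * (η (τ (η.symm b)) : FockSpace L →L[ℂ] FockSpace L)) (Phi D p I ι)⟫_ℂ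
        = phi D p I ι ((a : FockSpace L →L[ℂ] FockSpace L) * (η (τ (η.symm b)))) := rfl
    rw [e1, e2]
    rw [show ((⟨a, ha⟩ : A I) : FockSpace L →L[ℂ] FockSpace L) = a from rfl] at h1 h2
    rw [h1, h2, sub_self]
  have hd0 : d = 0 := key_zero hD hinj hdisj hppos hdmem hzero
  have : (β b : FockSpace L →L[ℂ] FockSpace L)
      = (η (τ (η.symm b)) : FockSpace L →L[ℂ] FockSpace L) := sub_eq_zero.1 hd0
  exact Subtype.ext this


end Fermion
end
end

section
/- (Main example) Let I ⊆ L be finite, ι : I → J a bijection onto J ⊆ L with I ∩ J = ∅, and σ : L → L a permutation of I (identity on L\I). Let U be the unitary on H with U f_∅ = f_∅, U f_{(l_1,…,l_n)} = f_{(σ(l_1),…,σ(l_n))}, and let V be the unitary with V f_∅ = f_∅, V f_{(l_1,…,l_n)} = f_{(σ^ι(l_1),…,σ^ι(l_n))}, where σ^ι = ι∘σ∘ι^{-1} on J and the identity on L\J. Define τ : A(I) → A(I) by τ(a) = (1/2)(U* a U + U a U*) and τ^ι : A(ι(I)) → A(ι(I)) by τ^ι(b) = (1/2)(V* b V + V b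 V*). Let (p_M)_{M ∈ D_I} be a probability distribution such that p_M = p_N whenever M, N ∈ D_I have the same length, and set Φ = Σ_{M ∈ D_I} p_M^{1/2} f_{M ι(M)} and φ(x) = ⟨Φ, xΦ⟩. Then fermionic standard quantum detailed balance holds: φ(τ(a) b) = φ(a τ^ι(b)) for all a ∈ A(I) and b ∈ A(ι(I)). -/
noncomputable section
open scoped InnerProductSpace ComplexConjugate
open ContinuousLinearMap

namespace Fermion

variable (L : Type) [Fintype L] [LinearOrder L]

variable {L}

/-! ### Auxiliary lemmas -/

section Aux

set_option maxHeartbeats 1000000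

/-- Extensionality of operators via the standard basis `single S 1`. -/
lemma clm_ext' {X Y : FockSpace L →L[ℂ] FockSpace L}
    (h : ∀ S : Finset L, X (EuclideanSpace.single S 1) = Y (EuclideanSpace.single S 1)) :
    X = Y := by
  apply ContinuousLinearMap.coe_injective
  apply Module.Basis.ext (EuclideanSpace.basisFun (Finset L) ℂ).toBasis
  intro S
  simpa [OrthonormalBasis.coe_toBasis, EuclideanSpace.basisFun_apply] using h S

lemma cre_single (l : L) (S : Finset L) :
    cre l (EuclideanSpace.single S 1) =
      if l ∈ S then 0 else jwSign l S • EuclideanSpace.single (insert l S) 1 := by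
  have hb : (EuclideanSpace.basisFun (Finset L) ℂ).toBasis S = EuclideanSpace.single S 1 := by
    rw [OrthonormalBasis.coe_toBasis, EuclideanSpace.basisFun_apply]
  have := Module.Basis.constr_basis (EuclideanSpace.basisFun (Finset L) ℂ).toBasis ℂ
    (fun T => if l ∈ T then (0 : FockSpace L)
      else jwSign l T • EuclideanSpace.single (insert l T) 1) S
  rw [hb] at this
  simp only [cre, LinearMap.coe_toContinuousLinearMap']
  exact this

lemma jwSign_insert (l m : L) (S : Finset L) (hm : m ∉ S) :
    jwSign l (insert m S) = (if m < l then (-1 : ℂ) else 1) * jwSign l S := by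
  unfold jwSign
  rw [Finset.filter_insert]
  split
  · rw [Finset.card_insert_of_notMem (fun h => hm (Finset.mem_of_mem_filter m h)), pow_succ]
    ring
  · rw [one_mul]

lemma cre_anticomm (l m : L) : cre l * cre m = -(cre m * cre l) := by
  apply clm_ext'
  intro S
  simp only [ContinuousLinearMap.mul_apply, ContinuousLinearMap.neg_apply]
  rcases eq_or_ne l m with rfl | hne
  · by_cases hl : l ∈ S
    · simp [cre_single, hl]
    · simp [cre_single, hl]
  · by_cases hm : m ∈ S <;> by_cases hl : l ∈ S
    · simp [cre_single, hm, hl]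
    · simp [cre_single, hm, hl, Finset.mem_insert, hne]
    · simp [cre_single, hm, hl, Finset.mem_insert, hne.symm]
    · rw [cre_single m S, if_neg hm, map_smul, cre_single l (insert m S),
        if_neg (by simp [hne, hl]), cre_single l S, if_neg hl, map_smul,
        cre_single m (insert l S), if_neg (by simp [hne.symm, hm])]
      rw [smul_smul, smul_smul, Finset.insert_comm l m S, ← neg_smul]
      congr 1
      rw [jwSign_insert l m S hm, jwSign_insert m l S hl]
      rcases hne.lt_or_gt with h | h
      · rw [if_neg (not_lt.2 h.le), if_pos h]; ring
      · rw [if_pos h, if_neg (not_lt.2 h.le)]; ring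

lemma cre_anticomm_apply (l m : L) (v : FockSpace L) :
    cre l (cre m v) = -(cre m (cre l v)) := by
  have := DFunLike.congr_fun (cre_anticomm l m) v
  simpa [ContinuousLinearMap.mul_apply] using this

/-- Number of inversions of a list. -/
def invc : List L → ℕ
  | [] => 0
  | l :: M => M.countP (fun m => decide (m < l)) + invc M

lemma list_toFinset_map {α β : Type*} [DecidableEq α] [DecidableEq β] (f : α → β)
    (l : List α) : (l.map f).toFinset = l.toFinset.image f := by
  ext x; simp

lemma fvec_sign (M : List L) (h : M.Nodup) :
    fvec M = ((-1 : ℂ) ^ invc M) • EuclideanSpace.single M.toFinset 1 := by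
  induction M with
  | nil => simp [fvec, invc, vac]
  | cons l M ih =>
    obtain ⟨hl, hM⟩ := List.nodup_cons.1 h
    have h1 : fvec (l :: M) = cre l (fvec M) := rfl
    have hlS : l ∉ M.toFinset := by simpa using hl
    rw [h1, ih hM, map_smul, cre_single, if_neg hlS, List.toFinset_cons, smul_smul]
    have hcard : (M.toFinset.filter (fun k => k < l)).card
        = M.countP (fun m => decide (m < l)) := by
      rw [List.countP_eq_length_filter, ← List.toFinset_card_of_nodup (hM.filter _),
        List.toFinset_filter]
      simp
    rw [show invc (l :: M) = M.countP (fun m => decide (m < l)) + invc M from rfl]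
    congr 1
    rw [jwSign, hcard, pow_add]
    ring

lemma fvec_D {D : Finset L → List L} (hD : IsEnum D) (S : Finset L) :
    fvec (D S) = ((-1 : ℂ) ^ invc (D S)) • EuclideanSpace.single S 1 := by
  have := fvec_sign (D S) (hD S).1
  rwa [(hD S).2] at this

lemma single_eq_fvec_D {D : Finset L → List L} (hD : IsEnum D) (S : Finset L) :
    EuclideanSpace.single S (1 : ℂ) = ((-1 : ℂ) ^ invc (D S)) • fvec (D S) := by
  rw [fvec_D hD S, smul_smul, ← mul_pow]
  norm_num

lemma clm_ext_fvec {D : Finset L → List L} (hD : IsEnum D)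
    {X Y : FockSpace L →L[ℂ] FockSpace L}
    (h : ∀ S : Finset L, X (fvec (D S)) = Y (fvec (D S))) : X = Y := by
  apply clm_ext'
  intro S
  rw [single_eq_fvec_D hD S, map_smul, map_smul, h S]

lemma fvec_cons (l : L) (M : List L) : fvec (l :: M) = cre l (fvec M) := rfl

lemma fvec_append (M N : List L) :
    fvec (M ++ N) = M.foldr (fun l v => cre l v) (fvec N) := by
  simp [fvec, List.foldr_append]

lemma foldr_cre (M : List L) (a : L) (v : FockSpace L) :
    M.foldr (fun l w => cre l w) (cre a v)
      = ((-1 : ℂ) ^ M.length) • cre a (M.foldr (fun l w => cre l w) v) := by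
  induction M with
  | nil => simp
  | cons x M ih =>
    simp only [List.foldr_cons, ih, map_smul, List.length_cons]
    rw [cre_anticomm_apply x a, pow_succ, mul_comm, mul_smul]
    simp

lemma fvec_pair_cons (f : L → L) (x : L) (M : List L) :
    fvec ((x :: M) ++ (x :: M).map f)
      = ((-1 : ℂ) ^ M.length) • cre x (cre (f x) (fvec (M ++ M.map f))) := by
  have h1 : (x :: M) ++ (x :: M).map f = x :: (M ++ (f x :: M.map f)) := by simp
  rw [h1, fvec_cons, fvec_append, fvec_cons, foldr_cre, map_smul, ← fvec_append]

lemma fvec_pair_perm (f : L → L) {M N : List L} (h : M.Perm N) :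
    fvec (M ++ M.map f) = fvec (N ++ N.map f) := by
  induction h with
  | nil => rfl
  | cons x h ih => rw [fvec_pair_cons, fvec_pair_cons, ih, h.length_eq]
  | swap x y M =>
    have key : ∀ (a b : L) (w : FockSpace L),
        cre a (cre (f a) (cre b (cre (f b) w))) = cre b (cre (f b) (cre a (cre (f a) w))) := by
      intro a b w
      rw [cre_anticomm_apply (f a) b (cre (f b) w)]
      simp only [map_neg]
      rw [cre_anticomm_apply a b (cre (f a) (cre (f b) w))]
      simp only [neg_neg]
      rw [cre_anticomm_apply (f a) (f b) w]
      simp only [map_neg]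
      rw [cre_anticomm_apply a (f b) (cre (f a) w)]
      simp only [map_neg, neg_neg]
    rw [fvec_pair_cons, fvec_pair_cons, fvec_pair_cons, fvec_pair_cons]
    simp only [map_smul, smul_smul, List.length_cons]
    rw [key y x (fvec (M ++ M.map f))]
  | trans h1 h2 ih1 ih2 => rw [ih1, ih2]

end Aux

section Aux2

set_option maxHeartbeats 1000000

/-- Invariance of the entangled vector `Φ` under a unitary implementing `σ` on both factors. -/
lemma Phi_invariant (D : Finset L → List L) (hD : IsEnum D) (p : Finset L → ℝ)
    (I : Finset L) (ι : L → L) (σ : Equiv.Perm L) (hσ : ∀ l ∉ I, σ l = l)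
    (hlen : ∀ S ∈ I.powerset, ∀ T ∈ I.powerset, S.card = T.card → p S = p T)
    (ρ : L → L) (hρ1 : ∀ l ∈ I, ρ l = σ l) (hρ2 : ∀ l ∈ I, ρ (ι l) = ι (σ l))
    (W : FockSpace L →L[ℂ] FockSpace L) (hW : ∀ M, W (fvec M) = fvec (M.map ρ)) :
    W (Phi D p I ι) = Phi D p I ι := by
  have hσI : ∀ l ∈ I, σ l ∈ I := by
    intro l hl
    by_contra h
    have h2 : σ l = l := σ.injective (hσ (σ l) h)
    exact h (by rw [h2]; exact hl)
  have hσI' : ∀ l ∈ I, σ.symm l ∈ I := by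
    intro l hl
    by_contra h
    have h2 : σ (σ.symm l) = σ.symm l := hσ (σ.symm l) h
    rw [Equiv.apply_symm_apply] at h2
    exact h (h2 ▸ hl)
  have hmem : ∀ S ∈ I.powerset, ∀ x ∈ D S, x ∈ I := by
    intro S hS x hx
    exact Finset.mem_powerset.1 hS ((hD S).2 ▸ List.mem_toFinset.2 hx)
  unfold Phi
  rw [map_sum]
  simp only [map_smul, hW]
  refine Finset.sum_nbij' (fun S => S.image σ) (fun T => T.image σ.symm) ?_ ?_ ?_ ?_ ?_
  · intro S hS
    rw [Finset.mem_powerset] at hS ⊢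
    intro x hx
    obtain ⟨y, hy, rfl⟩ := Finset.mem_image.1 hx
    exact hσI y (hS hy)
  · intro T hT
    rw [Finset.mem_powerset] at hT ⊢
    intro x hx
    obtain ⟨y, hy, rfl⟩ := Finset.mem_image.1 hx
    exact hσI' y (hT hy)
  · intro S _
    ext x
    simp
  · intro T _
    ext x
    simp
  · intro S hS
    have hmap1 : (D S).map ρ = (D S).map σ := by
      apply List.map_congr_left
      intro x hx
      exact hρ1 x (hmem S hS x hx)
    have hmap2 : ((D S).map ι).map ρ = ((D S).map σ).map ι := by
      rw [List.map_map, List.map_map]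
      apply List.map_congr_left
      intro x hx
      exact hρ2 x (hmem S hS x hx)
    rw [List.map_append, hmap1, hmap2]
    have hperm : ((D S).map σ).Perm (D (S.image σ)) := by
      apply List.perm_of_nodup_nodup_toFinset_eq ((hD S).1.map σ.injective) (hD _).1
      rw [list_toFinset_map, (hD S).2, (hD _).2]
    rw [fvec_pair_perm ι hperm]
    have hcard : S.card = (S.image σ).card := (Finset.card_image_of_injective S σ.injective).symm
    have himgmem : S.image σ ∈ I.powerset := by
      rw [Finset.mem_powerset]
      intro x hx
      obtain ⟨y, hy, rfl⟩ := Finset.mem_image.1 hx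
      exact hσI y (Finset.mem_powerset.1 hS hy)
    rw [hlen S hS (S.image σ) himgmem hcard]

/-- A unitary implementing a permutation `ρ` fixing `K` pointwise commutes with `A K`. -/
lemma comm_with_A (D : Finset L → List L) (hD : IsEnum D) (K : Finset L)
    (W : FockSpace L →L[ℂ] FockSpace L)
    (hWu : W ∈ unitary (FockSpace L →L[ℂ] FockSpace L))
    (ρ : Equiv.Perm L) (hW : ∀ M, W (fvec M) = fvec (M.map ρ))
    (hfix : ∀ l ∈ K, ρ l = l) :
    ∀ x ∈ A K, W * x = x * W ∧ star W * x = x * star W := by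
  have hW' : ∀ M, (star W) (fvec M) = fvec (M.map ρ.symm) := by
    intro M
    have h1 : W (fvec (M.map ρ.symm)) = fvec M := by
      rw [hW, List.map_map]
      simp
    calc (star W) (fvec M) = (star W) (W (fvec (M.map ρ.symm))) := by rw [h1]
      _ = (star W * W) (fvec (M.map ρ.symm)) := rfl
      _ = fvec (M.map ρ.symm) := by rw [(Unitary.mem_iff.1 hWu).1]; rfl
  have key : ∀ (X : FockSpace L →L[ℂ] FockSpace L) (τ : L → L),
      (∀ M, X (fvec M) = fvec (M.map τ)) → ∀ l, τ l = l → X * cre l = cre l * X := by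
    intro X τ hX l hl
    apply clm_ext_fvec hD
    intro S
    show X (cre l (fvec (D S))) = cre l (X (fvec (D S)))
    rw [← fvec_cons, hX, hX, List.map_cons, hl, fvec_cons]
  have hcre : ∀ l ∈ K, W * cre l = cre l * W := fun l hl => key W ρ hW l (hfix l hl)
  have hcre' : ∀ l ∈ K, star W * cre l = cre l * star W := by
    intro l hl
    exact key (star W) ρ.symm hW' l ((Equiv.symm_apply_eq ρ).2 (hfix l hl).symm)
  have hann : ∀ l ∈ K, W * ann l = ann l * W := by
    intro l hl
    have := congrArg star (hcre' l hl)
    rw [star_mul, star_mul, star_star] at this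
    have hsc : star (cre l) = ann l := by
      rw [ContinuousLinearMap.star_eq_adjoint]
      rfl
    rw [hsc] at this
    exact this.symm
  have hann' : ∀ l ∈ K, star W * ann l = ann l * star W := by
    intro l hl
    have := congrArg star (hcre l hl)
    rw [star_mul, star_mul] at this
    have hsc : star (cre l) = ann l := by
      rw [ContinuousLinearMap.star_eq_adjoint]
      rfl
    rw [hsc] at this
    exact this.symm
  intro x hx
  induction hx using StarAlgebra.adjoin_induction with
  | mem x hxm =>
    obtain ⟨l, hl, rfl⟩ := hxm
    exact ⟨hann l hl, hann' l hl⟩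
  | algebraMap r =>
    exact ⟨(Algebra.commutes r W).symm, (Algebra.commutes r (star W)).symm⟩
  | add x y hx hy ihx ihy =>
    exact ⟨by rw [mul_add, add_mul, ihx.1, ihy.1], by rw [mul_add, add_mul, ihx.2, ihy.2]⟩
  | mul x y hx hy ihx ihy =>
    constructor
    · rw [← mul_assoc, ihx.1, mul_assoc, ihy.1, mul_assoc]
    · rw [← mul_assoc, ihx.2, mul_assoc, ihy.2, mul_assoc]
  | star x hx ihx =>
    constructor
    · have := congrArg star ihx.2
      rw [star_mul, star_mul, star_star] at this
      exact this.symm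
    · have := congrArg star ihx.1
      rw [star_mul, star_mul] at this
      exact this.symm

end Aux2
set_option maxHeartbeats 1000000

/-- Main example. Let `I ⊆ L` be finite, `ι : I → J` a bijection onto `J`
with `I ∩ J = ∅`, and `σ : L → L` a permutation of `I` (identity on `L \ I`). Let `U` be the
unitary with `U f_∅ = f_∅`, `U f_{(l₁,…,lₙ)} = f_{(σ(l₁),…,σ(lₙ))}`, and `V` the unitary with
`V f_∅ = f_∅`, `V f_{(l₁,…,lₙ)} = f_{(σ^ι(l₁),…,σ^ι(lₙ))}`, where `σ^ι = ι∘σ∘ι⁻¹` on `J` and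
the identity on `L \ J`. Define `τ(a) = (1/2)(U* a U + U a U*)` on `A(I)` and
`τ^ι(b) = (1/2)(V* b V + V b V*)` on `A(ι(I))`. If `(p_M)_{M ∈ D_I}` is a probability
distribution with `p_M = p_N` whenever `M, N ∈ D_I` have the same length, then fermionic
standard quantum detailed balance holds: `φ(τ(a) b) = φ(a τ^ι(b))` for all `a ∈ A(I)`,
`b ∈ A(ι(I))`. -/
theorem fermionic_detailed_balance_example
    {L : Type} [Fintype L] [LinearOrder L]
    (I J : Finset L) (ι : L → L)
    (hinj : Set.InjOn ι (I : Set L)) (himg : I.image ι = J) (hIJ : Disjoint I J)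
    (D : Finset L → List L) (hD : IsEnum D)
    (σ : Equiv.Perm L) (hσ : ∀ l ∉ I, σ l = l)
    (σι : Equiv.Perm L) (hσι : ∀ l ∈ I, σι (ι l) = ι (σ l)) (hσι' : ∀ l ∉ J, σι l = l)
    (U : FockSpace L →L[ℂ] FockSpace L)
    (hUu : U ∈ unitary (FockSpace L →L[ℂ] FockSpace L))
    (hU : ∀ M : List L, U (fvec M) = fvec (M.map σ))
    (V : FockSpace L →L[ℂ] FockSpace L)
    (hVu : V ∈ unitary (FockSpace L →L[ℂ] FockSpace L))
    (hV : ∀ M : List L, V (fvec M) = fvec (M.map σι))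
    (p : Finset L → ℝ)
    (hp0 : ∀ S ∈ I.powerset, 0 ≤ p S) (hp1 : ∑ S ∈ I.powerset, p S = 1)
    (hlen : ∀ S ∈ I.powerset, ∀ T ∈ I.powerset, S.card = T.card → p S = p T) :
    ∀ a ∈ A I, ∀ b ∈ A (I.image ι),
      phi D p I ι (((1/2 : ℂ) • (star U * a * U + U * a * star U)) * b)
        = phi D p I ι (a * ((1/2 : ℂ) • (star V * b * V + V * b * star V))) := by
  intro a ha b hb
  set Φ := Phi D p I ι with hΦdef
  have hIn : ∀ l ∈ I, l ∉ J := fun l hl => Finset.disjoint_left.1 hIJ hl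
  have hJn : ∀ l ∈ I.image ι, l ∉ I := by
    intro l hl
    rw [himg] at hl
    exact Finset.disjoint_right.1 hIJ hl
  have hσI : ∀ l ∈ I, σ l ∈ I := by
    intro l hl
    by_contra h
    have h2 : σ l = l := σ.injective (hσ (σ l) h)
    exact h (by rw [h2]; exact hl)
  -- Φ is invariant under U∘V and V∘U
  have hUV : (U * V) Φ = Φ := by
    apply Phi_invariant D hD p I ι σ hσ hlen (fun l => σ (σι l))
    · intro l hl
      rw [hσι' l (hIn l hl)]
    · intro l hl
      have hι : ι l ∈ I.image ι := Finset.mem_image_of_mem ι hl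
      have hισ : ι (σ l) ∈ I.image ι := Finset.mem_image_of_mem ι (hσI l hl)
      rw [hσι l hl, hσ (ι (σ l)) (hJn _ hισ)]
    · intro M
      show U (V (fvec M)) = _
      rw [hV, hU, List.map_map]
      rfl
  have hVU : (V * U) Φ = Φ := by
    apply Phi_invariant D hD p I ι σ hσ hlen (fun l => σι (σ l))
    · intro l hl
      rw [hσι' (σ l) (hIn (σ l) (hσI l hl))]
    · intro l hl
      have hι : ι l ∈ I.image ι := Finset.mem_image_of_mem ι hl
      rw [hσ (ι l) (hJn _ hι), hσι l hl]
    · intro M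
      show V (U (fvec M)) = _
      rw [hU, hV, List.map_map]
      rfl
  have h1U : star U * U = 1 := (Unitary.mem_iff.1 hUu).1
  have h1V : star V * V = 1 := (Unitary.mem_iff.1 hVu).1
  have hVΦ : V Φ = star U Φ := by
    conv_rhs => rw [← hUV]
    show V Φ = (star U * (U * V)) Φ
    rw [← mul_assoc, h1U, one_mul]
  have hUΦ : U Φ = star V Φ := by
    conv_rhs => rw [← hVU]
    show U Φ = (star V * (V * U)) Φ
    rw [← mul_assoc, h1V, one_mul]
  -- commutation of U with A(ι(I)) and of V with A(I)
  have hbcomm := comm_with_A D hD (I.image ι) U hUu σ hU (fun l hl => hσ l (hJn l hl)) b hb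
  have hacomm := comm_with_A D hD I V hVu σι hV (fun l hl => hσι' l (hIn l hl)) a ha
  have hUb : ∀ v, U (b v) = b (U v) := fun v => by
    simpa [ContinuousLinearMap.mul_apply] using DFunLike.congr_fun hbcomm.1 v
  have hU'b : ∀ v, (star U) (b v) = b ((star U) v) := fun v => by
    simpa [ContinuousLinearMap.mul_apply] using DFunLike.congr_fun hbcomm.2 v
  have hVa : ∀ v, V (a v) = a (V v) := fun v => by
    simpa [ContinuousLinearMap.mul_apply] using DFunLike.congr_fun hacomm.1 v
  have hV'a : ∀ v, (star V) (a v) = a ((star V) v) := fun v => by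
    simpa [ContinuousLinearMap.mul_apply] using DFunLike.congr_fun hacomm.2 v
  -- pass to adjoints
  simp only [ContinuousLinearMap.star_eq_adjoint] at hVΦ hUΦ hU'b hV'a
  -- expand the state
  unfold phi
  rw [← hΦdef]
  simp only [ContinuousLinearMap.star_eq_adjoint, ContinuousLinearMap.mul_apply,
    ContinuousLinearMap.add_apply, ContinuousLinearMap.smul_apply, map_add, map_smul]
  rw [inner_smul_right, inner_smul_right, inner_add_right, inner_add_right]
  have T1 : ⟪Φ, (ContinuousLinearMap.adjoint U) (a (U (b Φ)))⟫_ℂ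
      = ⟪Φ, a (V (b ((ContinuousLinearMap.adjoint V) Φ)))⟫_ℂ := by
    rw [hUb Φ, hUΦ, ContinuousLinearMap.adjoint_inner_right, hUΦ,
      ContinuousLinearMap.adjoint_inner_left, hVa]
  have T2 : ⟪Φ, U (a ((ContinuousLinearMap.adjoint U) (b Φ)))⟫_ℂ
      = ⟪Φ, a ((ContinuousLinearMap.adjoint V) (b (V Φ)))⟫_ℂ := by
    rw [hU'b Φ, ← hVΦ, ← ContinuousLinearMap.adjoint_inner_left U, ← hVΦ,
      ← ContinuousLinearMap.adjoint_inner_right V, hV'a]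
  rw [T1, T2]
  ring

end Fermion
end
end

section
/- (Standard quantum detailed balance for permutation dynamics) Let K be an n-dimensional complex Hilbert space with orthonormal basis d_1,…,d_n, let ϖ be a permutation of {1,…,n}, and let W : K → K be the unitary with W d_j = d_{ϖ(j)}. Define α : B(K) → B(K) by α(a) = (1/2)(W* a W + W a W*). Let p_1,…,p_n be probabilities such that p_j = p_k whenever j and k lie in the same cycle of ϖ, set Ω = Σ_{j=1}^n p_j^{1/2} d_j ⊗ d_j ∈ K ⊗ K and ω(x) = ⟨Ω, xΩ⟩ for x ∈ B(K ⊗ K). Then standard quantum detailed balance holds: ω(α(a) ⊗ b) = ω(a ⊗ α(b)) for all a, b ∈ B(K). -/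
/-!
**Statement 17** (Standard quantum detailed balance for permutation dynamics).
`K` is an `n`-dimensional complex Hilbert space with orthonormal basis `d_1, …, d_n`; its
operator algebra `B(K)` is realized as `Matrix (Fin n) (Fin n) ℂ` (in the basis `d_j`), the
operator `a ⊗ b` on `K ⊗ K` as the Kronecker product `a ⊗ₖ b` (acting on
`EuclideanSpace ℂ (Fin n × Fin n)`, where `d_j ⊗ d_k` is the basis vector indexed by
`(j,k)`), and `⟨x, y⟩ = Σ conj(x i) * y i` (linear in the second slot).
-/

noncomputable section
open scoped Kronecker Matrix

namespace PermDynamics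

/-- The unitary `W` with `W d_j = d_{ϖ(j)}`. -/
def W (n : ℕ) (ϖ : Equiv.Perm (Fin n)) : Matrix (Fin n) (Fin n) ℂ :=
  Matrix.of fun i j => if i = ϖ j then 1 else 0

/-- The dynamics `α(a) = (1/2)(W* a W + W a W*)`. -/
def dyn (n : ℕ) (ϖ : Equiv.Perm (Fin n)) (a : Matrix (Fin n) (Fin n) ℂ) :
    Matrix (Fin n) (Fin n) ℂ :=
  (1/2 : ℂ) • ((W n ϖ)ᴴ * a * W n ϖ + W n ϖ * a * (W n ϖ)ᴴ)

/-- The entangled vector `Ω = Σ_j p_j^{1/2} d_j ⊗ d_j ∈ K ⊗ K`. -/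
def Omega (n : ℕ) (p : Fin n → ℝ) : Fin n × Fin n → ℂ :=
  fun jk => if jk.1 = jk.2 then (Real.sqrt (p jk.1) : ℂ) else 0

/-- The state `ω(x) = ⟨Ω, x Ω⟩` on `B(K ⊗ K)`. -/
def omega (n : ℕ) (p : Fin n → ℝ) (x : Matrix (Fin n × Fin n) (Fin n × Fin n) ℂ) : ℂ :=
  star (Omega n p) ⬝ᵥ x.mulVec (Omega n p)


lemma omega_kron (n : ℕ) (p : Fin n → ℝ) (a b : Matrix (Fin n) (Fin n) ℂ) :
    omega n p (a ⊗ₖ b) =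
      ∑ j, ∑ k, ((Real.sqrt (p j) : ℂ) * (Real.sqrt (p k) : ℂ)) * (a j k * b j k) := by
  unfold omega Omega
  simp [dotProduct, Matrix.mulVec, Matrix.kroneckerMap_apply, Fintype.sum_prod_type,
    mul_ite, ite_mul, Finset.mul_sum, Finset.sum_ite_eq, apply_ite, mul_comm, mul_left_comm,
    mul_assoc]

lemma WHaW (n : ℕ) (ϖ : Equiv.Perm (Fin n)) (a : Matrix (Fin n) (Fin n) ℂ) (j k : Fin n) :
    ((W n ϖ)ᴴ * a * W n ϖ) j k = a (ϖ j) (ϖ k) := by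
  simp [W, Matrix.mul_apply, Matrix.conjTranspose_apply, ite_mul, mul_ite, apply_ite]

lemma WaWH (n : ℕ) (ϖ : Equiv.Perm (Fin n)) (a : Matrix (Fin n) (Fin n) ℂ) (j k : Fin n) :
    (W n ϖ * a * (W n ϖ)ᴴ) j k = a (ϖ⁻¹ j) (ϖ⁻¹ k) := by
  simp only [W, Matrix.mul_apply, Matrix.conjTranspose_apply, Matrix.of_apply]
  simp [ite_mul, mul_ite, apply_ite, ← Equiv.symm_apply_eq, Finset.sum_ite_eq,
    Equiv.Perm.inv_def]

/-- If the probabilities `p_1, …, p_n` satisfy `p_j = p_k` whenever `j` and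
`k` lie in the same cycle of the permutation `ϖ`, then standard quantum detailed balance
holds for `α(a) = (1/2)(W* a W + W a W*)`: `ω(α(a) ⊗ b) = ω(a ⊗ α(b))` for all
`a, b ∈ B(K)`. -/
theorem standard_detailed_balance_for_permutation_dynamics
    (n : ℕ) (ϖ : Equiv.Perm (Fin n)) (p : Fin n → ℝ)
    (hp0 : ∀ j, 0 ≤ p j) (hp1 : ∑ j, p j = 1)
    (hcyc : ∀ j k, ϖ.SameCycle j k → p j = p k) :
    ∀ a b : Matrix (Fin n) (Fin n) ℂ,
      omega n p ((dyn n ϖ a) ⊗ₖ b) = omega n p (a ⊗ₖ (dyn n ϖ b)) := by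
  intro a b
  rw [omega_kron, omega_kron]
  simp only [dyn, Matrix.smul_apply, Matrix.add_apply, WHaW, WaWH, smul_eq_mul]
  have hpw : ∀ j, (Real.sqrt (p (ϖ j)) : ℂ) = (Real.sqrt (p j) : ℂ) := by
    intro j
    rw [← hcyc j (ϖ j) (Equiv.Perm.sameCycle_apply_right.mpr (Equiv.Perm.SameCycle.refl ϖ j))]
  have key : ∀ u v : Matrix (Fin n) (Fin n) ℂ,
      (∑ j, ∑ k, ((Real.sqrt (p j) : ℂ) * (Real.sqrt (p k) : ℂ)) * (u (ϖ j) (ϖ k) * v j k))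
      = ∑ j, ∑ k, ((Real.sqrt (p j) : ℂ) * (Real.sqrt (p k) : ℂ)) *
          (u j k * v (ϖ⁻¹ j) (ϖ⁻¹ k)) := by
    intro u v
    refine Fintype.sum_equiv ϖ _ _ fun j => ?_
    refine Fintype.sum_equiv ϖ _ _ fun k => ?_
    simp [hpw]
  have key2 :
      (∑ j, ∑ k, ((Real.sqrt (p j) : ℂ) * (Real.sqrt (p k) : ℂ)) *
          (a (ϖ⁻¹ j) (ϖ⁻¹ k) * b j k))
      = ∑ j, ∑ k, ((Real.sqrt (p j) : ℂ) * (Real.sqrt (p k) : ℂ)) *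
          (a j k * b (ϖ j) (ϖ k)) := by
    calc (∑ j, ∑ k, ((Real.sqrt (p j) : ℂ) * (Real.sqrt (p k) : ℂ)) *
          (a (ϖ⁻¹ j) (ϖ⁻¹ k) * b j k))
        = ∑ j, ∑ k, ((Real.sqrt (p j) : ℂ) * (Real.sqrt (p k) : ℂ)) *
          (b j k * a (ϖ⁻¹ j) (ϖ⁻¹ k)) := by
            refine Finset.sum_congr rfl fun j _ => Finset.sum_congr rfl fun k _ => ?_; ring
      _ = ∑ j, ∑ k, ((Real.sqrt (p j) : ℂ) * (Real.sqrt (p k) : ℂ)) *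
          (b (ϖ j) (ϖ k) * a j k) := (key b a).symm
      _ = _ := by
            refine Finset.sum_congr rfl fun j _ => Finset.sum_congr rfl fun k _ => ?_; ring
  calc (∑ j, ∑ k, ((Real.sqrt (p j) : ℂ) * (Real.sqrt (p k) : ℂ)) *
          ((1/2 : ℂ) * (a (ϖ j) (ϖ k) + a (ϖ⁻¹ j) (ϖ⁻¹ k)) * b j k))
      = (1/2 : ℂ) *
          ((∑ j, ∑ k, ((Real.sqrt (p j) : ℂ) * (Real.sqrt (p k) : ℂ)) *
              (a (ϖ j) (ϖ k) * b j k)) +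
           ∑ j, ∑ k, ((Real.sqrt (p j) : ℂ) * (Real.sqrt (p k) : ℂ)) *
              (a (ϖ⁻¹ j) (ϖ⁻¹ k) * b j k)) := by
        simp only [Finset.mul_sum, ← Finset.sum_add_distrib, mul_add]
        refine Finset.sum_congr rfl fun j _ => Finset.sum_congr rfl fun k _ => ?_; ring
    _ = (1/2 : ℂ) *
          ((∑ j, ∑ k, ((Real.sqrt (p j) : ℂ) * (Real.sqrt (p k) : ℂ)) *
              (a j k * b (ϖ⁻¹ j) (ϖ⁻¹ k))) +
           ∑ j, ∑ k, ((Real.sqrt (p j) : ℂ) * (Real.sqrt (p k) : ℂ)) *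
              (a j k * b (ϖ j) (ϖ k))) := by rw [key a b, key2]
    _ = _ := by
        simp only [Finset.mul_sum, ← Finset.sum_add_distrib, mul_add]
        refine Finset.sum_congr rfl fun j _ => Finset.sum_congr rfl fun k _ => ?_; ring

end PermDynamics
end
end
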